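/- Let H be a complex Hilbert space, let w be a partial isometry in B(H), and let x ∈ B(H) with ‖x‖ ≤ 1 and x w* = w w*. Then x = w + (1 - w w*) x (1 - w* w); in particular w* x = w* w and ‖w + t (1 - w w*) x (1 - w* w)‖ ≤ 1 for all t ∈ [0, 1]. -/

import Mathlib

variable {H : Type*} [NormedAddCommGroup H] [InnerProductSpace ℂ H] [CompleteSpace H]

private lemma aux_smul_nonneg (a : H →L[ℂ] H) (r : ℝ) (hr : 0 ≤ r) (ha : 0 ≤ a) :
    0 ≤ (r : ℂ) • a := by
  rw [ContinuousLinearMap.nonneg_iff_isPositive, ContinuousLinearMap.isPositive_def'] at ha ⊢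
  constructor
  · have h1 := ha.1
    rw [IsSelfAdjoint] at h1 ⊢
    rw [star_smul, h1, Complex.star_def, Complex.conj_ofReal]
  · intro x
    have h2 := ha.2 x
    simp only [ContinuousLinearMap.reApplyInnerSelf, ContinuousLinearMap.smul_apply] at *
    rw [inner_smul_left, Complex.conj_ofReal]
    have : RCLike.re (K := ℂ) ((r : ℂ) * inner ℂ (a x) x)
        = r * RCLike.re (K := ℂ) (inner ℂ (a x) x) := by
      simp [RCLike.mul_re]
    rw [this]
    positivity

private lemma aux_star_mul_self_le_one (x : H →L[ℂ] H) (hx : ‖x‖ ≤ 1) : star x * x ≤ 1 := by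
  rw [← CStarAlgebra.norm_le_one_iff_of_nonneg _ (star_mul_self_nonneg x)]
  calc ‖star x * x‖ ≤ ‖star x‖ * ‖x‖ := norm_mul_le _ _
  _ ≤ 1 := by rw [norm_star]; nlinarith [norm_nonneg x]

set_option maxHeartbeats 1000000 in
theorem stmt6 (w x : H →L[ℂ] H) (hw : w * star w * w = w)
    (hx : ‖x‖ ≤ 1) (hxw : x * star w = w * star w) :
    x = w + (1 - w * star w) * x * (1 - star w * w) ∧
      star w * x = star w * w ∧
      ∀ t : ℝ, t ∈ Set.Icc (0 : ℝ) 1 →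
        ‖w + (t : ℂ) • ((1 - w * star w) * x * (1 - star w * w))‖ ≤ 1 := by
  have hps : star (star w * w) = star w * w := by simp [star_mul]
  have hqs : star (w * star w) = w * star w := by simp [star_mul]
  have hw' : star w * (w * star w) = star w := by
    have := congrArg star hw
    simpa [star_mul, mul_assoc] using this
  have hxw' : w * star x = w * star w := by
    have := congrArg star hxw
    simpa [star_mul, mul_assoc] using this
  have hpp : (star w * w) * (star w * w) = star w * w := by
    have h1 : (star w * w) * (star w * w) = star w * (w * star w) * w := by noncomm_ring
    rw [h1, hw']
  have hqq : (w * star w) * (w * star w) = w * star w := by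
    have h1 : (w * star w) * (w * star w) = (w * star w * w) * star w := by noncomm_ring
    rw [h1, hw]
  -- key claim: star x * w = star w * w
  have hpz : (star w * w) * (star x * w) = star w * w := by
    have h1 : (star w * w) * (star x * w) = star w * (w * star x) * w := by noncomm_ring
    rw [h1, hxw', hw']
  have hzp : star (star x * w) * (star w * w) = star w * w := by
    have := congrArg star hpz
    rwa [star_mul, hps] at this
  have hxxs : x * star x ≤ 1 := by
    have := aux_star_mul_self_le_one (star x) (by rwa [norm_star])
    simpa using this
  have hzz_le : star (star x * w) * (star x * w) ≤ star w * w := by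
    have h := star_left_conjugate_le_conjugate hxxs w
    rw [mul_one, ← mul_assoc] at h
    have h1 : star (star x * w) * (star x * w) = star w * x * (star x * w) := by
      rw [star_mul, star_star]
    rw [h1]
    have h4 : star w * x * (star x * w) = star w * x * star x * w := by noncomm_ring
    rw [h4]
    exact h
  have hdiff : star (star x * w - star w * w) * (star x * w - star w * w)
      = star (star x * w) * (star x * w) - star w * w := by
    rw [star_sub, hps, sub_mul, mul_sub, mul_sub, hzp, hpz, hpp]
    abel
  have hle : star w * w ≤ star (star x * w) * (star x * w) := by
    have h0 : (0 : H →L[ℂ] H) ≤ star (star x * w - star w * w) * (star x * w - star w * w) :=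
      star_mul_self_nonneg _
    rw [hdiff] at h0
    exact sub_nonneg.mp h0
  have hzzp : star (star x * w) * (star x * w) = star w * w := le_antisymm hzz_le hle
  have hzeq : star x * w = star w * w := by
    have h0 : star (star x * w - star w * w) * (star x * w - star w * w) = 0 := by
      rw [hdiff, hzzp, sub_self]
    exact sub_eq_zero.mp ((CStarRing.star_mul_self_eq_zero_iff _).mp h0)
  have h2 : star w * x = star w * w := by
    have := congrArg star hzeq
    rwa [star_mul, star_star, hps] at this
  -- decomposition
  have hqx : (w * star w) * x = w := by
    rw [mul_assoc, h2, ← mul_assoc, hw]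
  have hxp : x * (star w * w) = w := by
    rw [← mul_assoc, hxw, hw]
  have hwp : w * (star w * w) = w := by
    rw [← mul_assoc, hw]
  have hdecomp : (1 - w * star w) * x * (1 - star w * w) = x - w := by
    have h1 : (1 - w * star w) * x = x - w := by rw [sub_mul, one_mul, hqx]
    rw [h1, mul_sub, mul_one, sub_mul, hxp, hwp, sub_self, sub_zero]
  refine ⟨by rw [hdecomp]; abel, h2, ?_⟩
  -- norm bound
  intro t ht
  obtain ⟨ht0, ht1⟩ := ht
  set y : H →L[ℂ] H := (1 - w * star w) * x * (1 - star w * w) with hy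
  have hwy : star w * y = 0 := by
    have h1 : star w * (1 - w * star w) = 0 := by
      rw [mul_sub, mul_one, hw', sub_self]
    rw [hy, ← mul_assoc, ← mul_assoc, h1, zero_mul, zero_mul]
  have hyw : star y * w = 0 := by
    have := congrArg star hwy
    rwa [star_mul, star_star, star_zero] at this
  have hys : star y = (1 - star w * w) * star x * (1 - w * star w) := by
    rw [hy, star_mul, star_mul, star_sub, star_sub, star_one, hps, hqs, mul_assoc]
  have hq1 : (1 - w * star w) * (1 - w * star w) = 1 - w * star w := by
    have he : (1 - w * star w) * (1 - w * star w)
        = 1 - w * star w - ((w * star w) - (w * star w) * (w * star w)) := by noncomm_ring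
    rw [he, hqq, sub_self, sub_zero]
  have hp1 : (1 - star w * w) * (1 - star w * w) = 1 - star w * w := by
    have he : (1 - star w * w) * (1 - star w * w)
        = 1 - star w * w - ((star w * w) - (star w * w) * (star w * w)) := by noncomm_ring
    rw [he, hpp, sub_self, sub_zero]
  have hyyeq : star y * y
      = (1 - star w * w) * (star x * (1 - w * star w) * x) * (1 - star w * w) := by
    rw [hys, hy]
    calc (1 - star w * w) * star x * (1 - w * star w)
          * ((1 - w * star w) * x * (1 - star w * w))
        = (1 - star w * w) * star x * ((1 - w * star w) * (1 - w * star w)) * x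
          * (1 - star w * w) := by noncomm_ring
    _ = (1 - star w * w) * (star x * (1 - w * star w) * x) * (1 - star w * w) := by
        rw [hq1]; noncomm_ring
  have hq_nonneg : (0 : H →L[ℂ] H) ≤ w * star w := by
    have := star_mul_self_nonneg (star w)
    rwa [star_star] at this
  have hmid : star x * (1 - w * star w) * x ≤ 1 := by
    have h1 : (1 - w * star w : H →L[ℂ] H) ≤ 1 := by
      simpa using sub_le_self (1 : H →L[ℂ] H) hq_nonneg
    have h3 := star_left_conjugate_le_conjugate h1 x
    rw [mul_one] at h3
    exact h3.trans (aux_star_mul_self_le_one x hx)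
  have hyy : star y * y ≤ 1 - star w * w := by
    have h3 := star_left_conjugate_le_conjugate hmid (1 - star w * w)
    rw [star_sub, star_one, hps, mul_one, hp1] at h3
    rwa [hyyeq]
  -- compute star a * a for a = w + t • y
  have hkey : star (w + (t : ℂ) • y) * (w + (t : ℂ) • y)
      = star w * w + ((t * t : ℝ) : ℂ) • (star y * y) := by
    rw [star_add, star_smul, Complex.star_def, Complex.conj_ofReal]
    rw [add_mul, mul_add, mul_add, smul_mul_assoc, smul_mul_assoc, mul_smul_comm,
      mul_smul_comm, hwy, hyw]
    simp only [smul_zero, mul_zero, zero_mul, add_zero, zero_add, smul_smul]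
    push_cast
    ring_nf
  have hnonneg : (0 : H →L[ℂ] H) ≤ star y * y := star_mul_self_nonneg y
  have hsmul_le : ((t * t : ℝ) : ℂ) • (star y * y) ≤ star y * y := by
    have h0 : (0 : H →L[ℂ] H) ≤ ((1 - t * t : ℝ) : ℂ) • (star y * y) :=
      aux_smul_nonneg _ _ (by nlinarith) hnonneg
    have heq : ((1 - t * t : ℝ) : ℂ) • (star y * y)
        = star y * y - ((t * t : ℝ) : ℂ) • (star y * y) := by
      push_cast
      rw [sub_smul, one_smul]
    rw [heq] at h0
    exact sub_nonneg.mp h0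
  have hle1 : star (w + (t : ℂ) • y) * (w + (t : ℂ) • y) ≤ 1 := by
    rw [hkey]
    calc star w * w + ((t * t : ℝ) : ℂ) • (star y * y) ≤ star w * w + (1 - star w * w) :=
      add_le_add le_rfl (hsmul_le.trans hyy)
    _ = 1 := by abel
  have hnorm : ‖star (w + (t : ℂ) • y) * (w + (t : ℂ) • y)‖ ≤ 1 := by
    rw [CStarAlgebra.norm_le_one_iff_of_nonneg _ (star_mul_self_nonneg _)]
    exact hle1
  rw [CStarRing.norm_star_mul_self] at hnorm
  nlinarith [norm_nonneg (w + (t : ℂ) • y)]
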